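/- arXiv:2303.14296 — 5 statements merged into one kernel-verified Lean document; each statement's English description precedes it below -/
import Mathlib

section
/- For every natural number n, there exist n consecutive natural numbers none of which is an SP number; that is, there exists a natural number m ≥ 1 such that for every i < n, the number m + i is not an SP number. -/
/-- A natural number is an SP number if it is a prime times a square `k^2` with `k ≥ 2`. -/
def IsSP (n : ℕ) : Prop := ∃ p k : ℕ, p.Prime ∧ 2 ≤ k ∧ n = p * k ^ 2

/-- `Qset` consists of `1` together with all SP numbers. -/
def Qset : Set ℕ := {n | n = 1 ∨ IsSP n}

/-- `N x` is the smallest element of `Qset` strictly greater than `x`. -/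
noncomputable def N (x : ℕ) : ℕ := sInf {y : ℕ | y ∈ Qset ∧ x < y}

/-- The loop operation: `dot a b = N (|a - b|)`. -/
noncomputable def dot (a b : ℕ) : ℕ := N ((a : ℤ) - (b : ℤ)).natAbs

lemma not_isSP_of_two_primes {x p q : ℕ} (hp : p.Prime) (hq : q.Prime) (hne : p ≠ q)
    (hdvd : p * q ∣ x) (hp2 : ¬ p ^ 2 ∣ x) (hq2 : ¬ q ^ 2 ∣ x) : ¬ IsSP x := by
  rintro ⟨r, k, hr, hk, rfl⟩
  have hpx : p ∣ r * k ^ 2 := dvd_trans (dvd_mul_right p q) hdvd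
  have hqx : q ∣ r * k ^ 2 := dvd_trans (dvd_mul_left q p) hdvd
  have hpr : p = r := by
    rcases hp.dvd_mul.mp hpx with h | h
    · exact (Nat.prime_dvd_prime_iff_eq hp hr).mp h
    · exfalso
      have := hp.dvd_of_dvd_pow h
      exact hp2 (Dvd.dvd.mul_left (pow_dvd_pow_of_dvd this 2) r)
  have hqr : q = r := by
    rcases hq.dvd_mul.mp hqx with h | h
    · exact (Nat.prime_dvd_prime_iff_eq hq hr).mp h
    · exfalso
      have := hq.dvd_of_dvd_pow h
      exact hq2 (Dvd.dvd.mul_left (pow_dvd_pow_of_dvd this 2) r)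
  exact hne (hpr.trans hqr.symm)

lemma sp_key (n : ℕ) : ∃ m M : ℕ, 1 ≤ m ∧ 1 ≤ M ∧
    ∀ t i, i < n → ¬ IsSP (m + t * M + i) := by
  induction n with
  | zero => exact ⟨1, 1, le_refl 1, le_refl 1, fun t i hi => absurd hi (Nat.not_lt_zero i)⟩
  | succ n ih =>
    obtain ⟨m, M, hm, hM, h⟩ := ih
    obtain ⟨p, hpge, hp⟩ := Nat.exists_infinite_primes (M + 1)
    obtain ⟨q, hqge, hq⟩ := Nat.exists_infinite_primes (p + 1)
    have hne : p ≠ q := by omega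
    have hpM : ¬ p ∣ M := fun hd => absurd (Nat.le_of_dvd hM hd) (by omega)
    have hqM : ¬ q ∣ M := fun hd => absurd (Nat.le_of_dvd hM hd) (by omega)
    set R := (p * q) ^ 2 with hRdef
    have hRpos : 0 < R := pow_pos (Nat.mul_pos hp.pos hq.pos) 2
    haveI : NeZero R := ⟨by omega⟩
    have hcop : M.Coprime R := by
      have h1 : M.Coprime p := (Nat.coprime_comm.mp ((hp.coprime_iff_not_dvd).mpr hpM))
      have h2 : M.Coprime q := (Nat.coprime_comm.mp ((hq.coprime_iff_not_dvd).mpr hqM))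
      exact (h1.mul_right h2).pow_right 2
    set u : (ZMod R)ˣ := ZMod.unitOfCoprime M hcop with hu
    set z : ZMod R := (((p * q : ℕ) : ZMod R) - ((m + n : ℕ) : ZMod R)) * ↑u⁻¹ with hz
    set t0 : ℕ := z.val with ht0
    refine ⟨m + t0 * M, M * R, by omega, Nat.mul_pos hM hRpos, ?_⟩
    intro s i hi
    rcases Nat.lt_or_ge i n with hin | hin
    · have : m + t0 * M + s * (M * R) + i = m + (t0 + s * R) * M + i := by ring
      rw [this]
      exact h _ i hin
    · have hieq : i = n := by omega
      rw [hieq]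
      have hcast : ((m + t0 * M + s * (M * R) + n : ℕ) : ZMod R) = ((p * q : ℕ) : ZMod R) := by
        have hval : ((t0 : ℕ) : ZMod R) = z := ZMod.natCast_rightInverse z
        have hRzero : ((R : ℕ) : ZMod R) = 0 := ZMod.natCast_self R
        calc ((m + t0 * M + s * (M * R) + n : ℕ) : ZMod R)
            = (m : ZMod R) + ((t0 : ℕ) : ZMod R) * (M : ZMod R)
              + (s : ZMod R) * ((M : ZMod R) * ((R : ℕ) : ZMod R)) + (n : ZMod R) := by
              push_cast; ring
          _ = (m : ZMod R) + z * ((u : (ZMod R)ˣ) : ZMod R) + (n : ZMod R) := by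
              rw [hval, hRzero, hu, ZMod.coe_unitOfCoprime]; ring
          _ = (m : ZMod R) + (((p * q : ℕ) : ZMod R) - ((m + n : ℕ) : ZMod R))
              + (n : ZMod R) := by
              rw [hz, mul_assoc, Units.inv_mul, mul_one]
          _ = ((p * q : ℕ) : ZMod R) := by push_cast; ring
      have hmod : (m + t0 * M + s * (M * R) + n) ≡ p * q [MOD R] :=
        (ZMod.natCast_eq_natCast_iff _ _ _).mp hcast
      set x := m + t0 * M + s * (M * R) + n with hx
      have hpqR : p * q ∣ R := dvd_pow_self _ two_ne_zero
      have hdvd : p * q ∣ x := by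
        have h0 : x ≡ p * q [MOD p * q] := hmod.of_dvd hpqR
        have h1 : p * q ≡ 0 [MOD p * q] := Nat.modEq_zero_iff_dvd.mpr dvd_rfl
        exact Nat.modEq_zero_iff_dvd.mp (h0.trans h1)
      have hp2 : ¬ p ^ 2 ∣ x := by
        intro hd
        have hpR : p ^ 2 ∣ R := by rw [hRdef, mul_pow]; exact dvd_mul_right _ _
        have h0 : x ≡ p * q [MOD p ^ 2] := hmod.of_dvd hpR
        have hx0 : x ≡ 0 [MOD p ^ 2] := Nat.modEq_zero_iff_dvd.mpr hd
        have hdq : p ^ 2 ∣ p * q := Nat.modEq_zero_iff_dvd.mp (h0.symm.trans hx0)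
        rw [pow_two] at hdq
        have : p ∣ q := (Nat.mul_dvd_mul_iff_left hp.pos).mp hdq
        exact hne ((Nat.prime_dvd_prime_iff_eq hp hq).mp this)
      have hq2 : ¬ q ^ 2 ∣ x := by
        intro hd
        have hqR : q ^ 2 ∣ R := by rw [hRdef, mul_pow]; exact dvd_mul_left _ _
        have h0 : x ≡ p * q [MOD q ^ 2] := hmod.of_dvd hqR
        have hx0 : x ≡ 0 [MOD q ^ 2] := Nat.modEq_zero_iff_dvd.mpr hd
        have hdp : q ^ 2 ∣ q * p := by
          rw [mul_comm q p]; exact Nat.modEq_zero_iff_dvd.mp (h0.symm.trans hx0)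
        rw [pow_two] at hdp
        have : q ∣ p := (Nat.mul_dvd_mul_iff_left hq.pos).mp hdp
        exact hne ((Nat.prime_dvd_prime_iff_eq hq hp).mp this).symm
      exact not_isSP_of_two_primes hp hq hne hdvd hp2 hq2

theorem sp_arbitrary_gaps (n : ℕ) :
    ∃ m : ℕ, 1 ≤ m ∧ ∀ i < n, ¬ IsSP (m + i) := by
  obtain ⟨m, M, hm, hM, h⟩ := sp_key n
  exact ⟨m, hm, fun i hi => by simpa using h 0 i hi⟩
end

section
/- For every natural number m, there exists an SP number a with a > m such that none of the m numbers a−1, a−2, …, a−m is an SP number. -/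
/-- If two distinct primes each divide `n` exactly once, then `n` is not an SP number. -/
lemma not_isSP_of_two_exact_primes {n u v : ℕ} (hu : u.Prime) (hv : v.Prime) (huv : u ≠ v)
    (h1 : u ∣ n) (h2 : ¬ u ^ 2 ∣ n) (h3 : v ∣ n) (h4 : ¬ v ^ 2 ∣ n) : ¬ IsSP n := by
  rintro ⟨p, k, hp, hk, rfl⟩
  have key : ∀ w : ℕ, w.Prime → w ∣ p * k ^ 2 → ¬ w ^ 2 ∣ p * k ^ 2 → w = p := by
    intro w hw hwd hw2
    by_contra hne
    have hwk : w ∣ k ^ 2 := by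
      rcases (Nat.Prime.dvd_mul hw).mp hwd with h | h
      · exact absurd ((Nat.prime_dvd_prime_iff_eq hw hp).mp h) hne
      · exact h
    have hwk' : w ∣ k := hw.dvd_of_dvd_pow hwk
    exact hw2 (Dvd.dvd.mul_left (pow_dvd_pow_of_dvd hwk' 2) p)
  exact huv ((key u hu h1 h2).trans (key v hv h3 h4).symm)

theorem sp_preceded_by_gap (m : ℕ) :
    ∃ a : ℕ, IsSP a ∧ m < a ∧ ∀ i : ℕ, 1 ≤ i → i ≤ m → ¬ IsSP (a - i) := by
  classical
  -- a sequence of distinct primes, all greater than `m`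
  set g : ℕ → ℕ := fun j => Nat.nth Nat.Prime (m + 1 + j) with hg
  have hsm : StrictMono (Nat.nth Nat.Prime) := Nat.nth_strictMono Nat.infinite_setOf_prime
  have hgp : ∀ j, (g j).Prime := fun j =>
    Nat.nth_mem_of_infinite Nat.infinite_setOf_prime (m + 1 + j)
  have hgm : ∀ j, m < g j := fun j =>
    lt_of_lt_of_le (by omega : m < m + 1 + j) (hsm.id_le (m + 1 + j))
  have hgmono : StrictMono g := fun j j' h => hsm (by omega)
  -- target residues
  set r : ℕ → ℕ := fun j => (j / 2 + 1) + g j with hr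
  set s : ℕ → ℕ := fun j => g j ^ 2 with hs
  set t : Finset ℕ := Finset.range (2 * m) with ht
  have hs0 : ∀ j ∈ t, s j ≠ 0 := fun j _ => pow_ne_zero 2 (hgp j).pos.ne'
  have hpp : Set.Pairwise ↑t (Function.onFun Nat.Coprime s) := by
    intro j _ j' _ hne
    exact Nat.Coprime.pow 2 2
      ((Nat.coprime_primes (hgp j) (hgp j')).mpr fun h => hne (hgmono.injective h))
  -- the CRT solution
  obtain ⟨a, haCRT⟩ := Nat.chineseRemainderOfFinset r s t hs0 hpp
  set M : ℕ := ∏ j ∈ t, s j with hM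
  have hM0 : 0 < M := Finset.prod_pos fun j hj => Nat.pos_of_ne_zero (hs0 j hj)
  haveI : NeZero M := ⟨hM0.ne'⟩
  -- `a` is coprime to `M`
  have hndvd : ∀ j ∈ t, ¬ g j ∣ a := by
    intro j hj hdvd
    have h1 : a ≡ r j [MOD g j] :=
      Nat.ModEq.of_dvd (dvd_pow_self (g j) two_ne_zero) (haCRT j hj)
    have h2 : g j ∣ r j := (Nat.modEq_zero_iff_dvd.mp
      (((Nat.modEq_zero_iff_dvd).mpr hdvd).symm.trans h1).symm)
    have h3 : g j ∣ j / 2 + 1 := by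
      have := Nat.dvd_sub h2 dvd_rfl
      simpa [hr] using this
    have h4 : g j ≤ j / 2 + 1 := Nat.le_of_dvd (by omega) h3
    have h5 : j < 2 * m := Finset.mem_range.mp hj
    have := hgm j
    omega
  have hco : Nat.Coprime a M := Nat.Coprime.prod_right fun j hj =>
    Nat.Coprime.pow_right 2 (((hgp j).coprime_iff_not_dvd).mpr (hndvd j hj)).symm
  -- Dirichlet: a prime `p ≡ a [MOD M]` with `p > m`
  obtain ⟨p, hpm, hp, hpmod⟩ :=
    Nat.forall_exists_prime_gt_and_eq_mod (q := M) (a := (a : ZMod M))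
      ((ZMod.isUnit_iff_coprime a M).mpr hco) m
  have hpa : p ≡ a [MOD M] := (ZMod.natCast_eq_natCast_iff p a M).mp hpmod
  -- the SP number
  refine ⟨p * (M + 1) ^ 2, ⟨p, M + 1, hp, by omega, rfl⟩, ?_, ?_⟩
  · calc m < p := hpm
      _ ≤ p * (M + 1) ^ 2 := Nat.le_mul_of_pos_right p (by positivity)
  · intro i hi1 hi2
    set A : ℕ := p * (M + 1) ^ 2 with hA
    have hAa : A ≡ a [MOD M] := by
      have hM1 : (M + 1) ≡ 0 + 1 [MOD M] :=
        Nat.ModEq.add_right 1 ((Nat.modEq_zero_iff_dvd).mpr dvd_rfl)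
      simpa using hpa.mul (hM1.pow 2)
    have hAbig : m < A := lt_of_lt_of_le hpm (Nat.le_mul_of_pos_right p (by positivity))
    -- exact divisibility at index j
    have key : ∀ j, j < 2 * m → j / 2 + 1 = i → g j ∣ (A - i) ∧ ¬ g j ^ 2 ∣ (A - i) := by
      intro j hj hji
      have hjt : j ∈ t := Finset.mem_range.mpr hj
      have hq := hgp j
      have hq2 : 2 ≤ g j := hq.two_le
      have hdvdM : g j ^ 2 ∣ M := Finset.dvd_prod_of_mem s hjt
      have hAj : A ≡ r j [MOD g j ^ 2] :=
        (Nat.ModEq.of_dvd hdvdM hAa).trans (haCRT j hjt)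
      have hrj : r j = i + g j := by simp [hr, hji]
      have hlt : i + g j < g j ^ 2 := by nlinarith [hgm j]
      have hmod : A % (g j ^ 2) = i + g j := by
        have := hAj
        rw [Nat.ModEq] at this
        rw [this, hrj, Nat.mod_eq_of_lt hlt]
      have hrep : A = g j ^ 2 * (A / (g j ^ 2)) + (i + g j) := by
        conv_lhs => rw [← Nat.div_add_mod A (g j ^ 2)]
        rw [hmod]
      set c := A / (g j ^ 2) with hc
      have hAi : A - i = g j ^ 2 * c + g j := by omega
      constructor
      · rw [hAi]
        exact ⟨g j * c + 1, by ring⟩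
      · intro hdvd
        rw [hAi] at hdvd
        have : g j ^ 2 ∣ g j := (Nat.dvd_add_right ⟨c, rfl⟩).mp hdvd
        have := Nat.le_of_dvd (by omega) this
        nlinarith
    have h1 := key (2 * (i - 1)) (by omega) (by omega)
    have h2 := key (2 * (i - 1) + 1) (by omega) (by omega)
    exact not_isSP_of_two_exact_primes (hgp _) (hgp _)
      (ne_of_lt (hgmono (by omega))) h1.1 h1.2 h2.1 h2.2
end

section
/- For every q ∈ Q there exists a ∈ Q such that a • q = a; equivalently, there exists a ∈ Q with a > q such that the smallest element of Q strictly greater than a − q is a itself. -/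
/-- A number exactly divisible (once) by two distinct primes is not in `Qset`. -/
lemma not_mem_Qset {n r₁ r₂ : ℕ} (h1 : r₁.Prime) (h2 : r₂.Prime) (hne : r₁ ≠ r₂)
    (d1 : r₁ ∣ n) (nd1 : ¬ r₁ ^ 2 ∣ n) (d2 : r₂ ∣ n) (nd2 : ¬ r₂ ^ 2 ∣ n) : n ∉ Qset := by
  rintro (rfl | ⟨p, k, hp, hk, rfl⟩)
  · exact absurd (Nat.dvd_one.mp d1) h1.one_lt.ne'
  · have key : ∀ r : ℕ, r.Prime → r ∣ p * k ^ 2 → ¬ r ^ 2 ∣ p * k ^ 2 → r = p := by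
      intro r hr hd hnd
      rcases (Nat.Prime.dvd_mul hr).mp hd with h | h
      · exact (Nat.prime_dvd_prime_iff_eq hr hp).mp h
      · exact absurd (Dvd.dvd.mul_left (pow_dvd_pow_of_dvd (hr.dvd_of_dvd_pow h) 2) p) hnd
    have e1 := key r₁ h1 d1 nd1
    have e2 := key r₂ h2 d2 nd2
    exact hne (e1.trans e2.symm)

/-- `Qset` is unbounded. -/
lemma Qset_unbounded (x : ℕ) : ∃ y, y ∈ Qset ∧ x < y := by
  obtain ⟨p, hpx, hp⟩ := Nat.exists_infinite_primes (x + 1)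
  refine ⟨2 * p ^ 2, Or.inr ⟨2, p, Nat.prime_two, hp.two_le, rfl⟩, ?_⟩
  nlinarith [hp.two_le]

lemma N_mem (x : ℕ) : N x ∈ Qset ∧ x < N x := by
  have h : {y : ℕ | y ∈ Qset ∧ x < y}.Nonempty := by
    obtain ⟨y, hy, hxy⟩ := Qset_unbounded x
    exact ⟨y, hy, hxy⟩
  exact Nat.sInf_mem h

lemma N_le {x y : ℕ} (hy : y ∈ Qset) (hxy : x < y) : N x ≤ y :=
  Nat.sInf_le ⟨hy, hxy⟩

/-- There are arbitrarily long gaps in `Qset`. -/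
lemma gap (q : ℕ) : ∃ n : ℕ, ∀ i < q, (n + i + 1) ∉ Qset := by
  classical
  set P : ℕ → ℕ := Nat.nth Nat.Prime with hP
  have hmono : StrictMono P := Nat.nth_strictMono Nat.infinite_setOf_prime
  have hprime : ∀ j, (P j).Prime := fun j => Nat.prime_nth_prime j
  set s : ℕ → ℕ := fun j => (P j) ^ 2 with hs_def
  set a : ℕ → ℕ := fun j => P j - (j / 2 + 1) with ha_def
  have hs : ∀ j ∈ Finset.range (2 * q), s j ≠ 0 := by
    intro j _
    exact pow_ne_zero _ (hprime j).pos.ne'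
  have pp : Set.Pairwise (Finset.range (2 * q) : Finset ℕ) (Function.onFun Nat.Coprime s) := by
    intro j _ j' _ hne
    exact Nat.Coprime.pow 2 2 ((Nat.coprime_primes (hprime j) (hprime j')).mpr
      (fun h => hne (hmono.injective h)))
  obtain ⟨n, hn⟩ := Nat.chineseRemainderOfFinset a s (Finset.range (2 * q)) hs pp
  have key : ∀ j < 2 * q, P j ∣ (n + j / 2 + 1) ∧ ¬ (P j) ^ 2 ∣ (n + j / 2 + 1) := by
    intro j hj
    have hcong : n ≡ a j [MOD s j] := hn j (Finset.mem_range.mpr hj)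
    have hle : j / 2 + 1 ≤ P j := by
      have h1 : j ≤ P j := hmono.le_apply
      have h2 : 2 ≤ P j := (hprime j).two_le
      omega
    have h2 : n + (j / 2 + 1) ≡ P j [MOD (P j) ^ 2] := by
      have := hcong.add_right (j / 2 + 1)
      rwa [ha_def, Nat.sub_add_cancel hle] at this
    have hpdvd : P j ∣ P j ^ 2 := dvd_pow_self _ two_ne_zero
    have hassoc : n + j / 2 + 1 = n + (j / 2 + 1) := by omega
    rw [hassoc]
    constructor
    · have h3 : n + (j / 2 + 1) ≡ P j [MOD P j] := h2.of_dvd hpdvd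
      have h4 : n + (j / 2 + 1) ≡ 0 [MOD P j] :=
        h3.trans ((Nat.modEq_zero_iff_dvd).mpr dvd_rfl)
      exact (Nat.modEq_zero_iff_dvd).mp h4
    · intro hd
      have h5 : n + (j / 2 + 1) ≡ 0 [MOD (P j) ^ 2] := (Nat.modEq_zero_iff_dvd).mpr hd
      have h6 : P j ≡ 0 [MOD (P j) ^ 2] := h2.symm.trans h5
      have h7 : (P j) ^ 2 ∣ P j := (Nat.modEq_zero_iff_dvd).mp h6
      have h8 := Nat.le_of_dvd (hprime j).pos h7
      have h9 : 2 ≤ P j := (hprime j).two_le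
      nlinarith [sq_nonneg (P j)]
  refine ⟨n, ?_⟩
  intro i hi
  have k1 := key (2 * i) (by omega)
  have k2 := key (2 * i + 1) (by omega)
  have e1 : (2 * i) / 2 = i := by omega
  have e2 : (2 * i + 1) / 2 = i := by omega
  rw [e1] at k1
  rw [e2] at k2
  have hne : P (2 * i) ≠ P (2 * i + 1) := fun h => by
    have := hmono.injective h; omega
  exact not_mem_Qset (hprime (2 * i)) (hprime (2 * i + 1)) hne k1.1 k1.2 k2.1 k2.2

theorem exists_fixed_point (q : ℕ) (hq : q ∈ Qset) :
    ∃ a ∈ Qset, q < a ∧ dot a q = a := by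
  have hq1 : 1 ≤ q := by
    rcases hq with rfl | ⟨p, k, hp, hk, rfl⟩
    · exact le_refl 1
    · have := hp.pos
      nlinarith [hk]
  obtain ⟨n, hn⟩ := gap q
  set a := N (n + q) with haN
  obtain ⟨haQ, hagt⟩ := N_mem (n + q)
  have hqa : q < a := by omega
  refine ⟨a, haQ, hqa, ?_⟩
  have habs : ((a : ℤ) - (q : ℤ)).natAbs = a - q := by omega
  rw [dot, habs]
  -- show N (a - q) = a
  have hup : N (a - q) ≤ a := N_le haQ (by omega)
  have hlow : a ≤ N (a - q) := by
    obtain ⟨hbQ, hbgt⟩ := N_mem (a - q)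
    by_contra hlt
    push_neg at hlt
    set b := N (a - q) with hb
    by_cases hcase : b ≤ n + q
    · have hbn : n < b := by omega
      have : b = n + (b - n - 1) + 1 := by omega
      exact hn (b - n - 1) (by omega) (this ▸ hbQ)
    · have : a ≤ b := N_le hbQ (by omega)
      omega
  omega
end

section
/- For every natural number n ≥ 4, there exists an SP number s with n < s ≤ 2n. -/
theorem sp_bertrand (n : ℕ) (hn : 4 ≤ n) :
    ∃ s : ℕ, IsSP s ∧ n < s ∧ s ≤ 2 * n := by
  obtain ⟨p, hp, h1, h2⟩ := Nat.exists_prime_lt_and_le_two_mul (n / 4) (by omega)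
  exact ⟨p * 2 ^ 2, ⟨p, 2, hp, le_refl 2, rfl⟩, by omega, by omega⟩
end

section
/- The operation • on Q is not associative: there exist elements a, b, c ∈ Q such that (a • b) • c ≠ a • (b • c). -/
lemma mem8 : (8 : ℕ) ∈ Qset := Or.inr ⟨2, 2, Nat.prime_two, le_refl 2, by norm_num⟩
lemma mem12 : (12 : ℕ) ∈ Qset := Or.inr ⟨3, 2, Nat.prime_three, le_refl 2, by norm_num⟩
lemma mem18 : (18 : ℕ) ∈ Qset := Or.inr ⟨2, 3, Nat.prime_two, by norm_num, by norm_num⟩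

lemma small_Q : ∀ n : ℕ, n ≤ 11 → n ∈ Qset → n = 1 ∨ n = 8 := by
  rintro n hn (h1 | ⟨p, k, hp, hk, he⟩)
  · exact Or.inl h1
  · have hp2 : 2 ≤ p := hp.two_le
    have h4 : 4 ≤ k ^ 2 := by nlinarith
    have hpn : p * 4 ≤ n := by nlinarith
    have hple : p ≤ 2 := by omega
    have hpeq : p = 2 := le_antisymm hple hp2
    subst hpeq
    have : k ^ 2 ≤ 5 := by omega
    have hk3 : k ≤ 2 := by nlinarith
    have : k = 2 := le_antisymm hk3 hk
    subst this
    right; omega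

lemma N_eq (x v : ℕ) (hv : v ∈ Qset) (hxv : x < v)
    (hmin : ∀ y, y ∈ Qset → x < y → v ≤ y) : N x = v := by
  unfold N
  have hne : v ∈ {y : ℕ | y ∈ Qset ∧ x < y} := ⟨hv, hxv⟩
  have h1 : sInf {y : ℕ | y ∈ Qset ∧ x < y} ≤ v := Nat.sInf_le hne
  have h2 := Nat.sInf_mem (⟨v, hne⟩ : Set.Nonempty {y : ℕ | y ∈ Qset ∧ x < y})
  exact le_antisymm h1 (hmin _ h2.1 h2.2)

lemma N0 : N 0 = 1 := by
  apply N_eq 0 1 (Or.inl rfl) (by norm_num)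
  intro y _ hy; omega

lemma N4 : N 4 = 8 := by
  apply N_eq 4 8 mem8 (by norm_num)
  intro y hyQ hy
  by_contra h
  rcases small_Q y (by omega) hyQ with h1 | h1 <;> omega

lemma N6 : N 6 = 8 := by
  apply N_eq 6 8 mem8 (by norm_num)
  intro y hyQ hy
  by_contra h
  rcases small_Q y (by omega) hyQ with h1 | h1 <;> omega

lemma N10 : N 10 = 12 := by
  apply N_eq 10 12 mem12 (by norm_num)
  intro y hyQ hy
  by_contra h
  rcases small_Q y (by omega) hyQ with h1 | h1 <;> omega

theorem dot_not_associative :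
    ∃ a b c : ℕ, a ∈ Qset ∧ b ∈ Qset ∧ c ∈ Qset ∧
      dot (dot a b) c ≠ dot a (dot b c) := by
  refine ⟨8, 12, 18, mem8, mem12, mem18, ?_⟩
  have h1 : dot 8 12 = 8 := by unfold dot; norm_num [N4]
  have h2 : dot 12 18 = 8 := by unfold dot; norm_num [N6]
  rw [h1, h2]
  have h3 : dot 8 18 = 12 := by unfold dot; norm_num [N10]
  have h4 : dot 8 8 = 1 := by unfold dot; norm_num [N0]
  rw [h3, h4]
  norm_num
end
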